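/- Let C be a symmetric operator on a domain D(C) in a Hilbert space H such that, in the sense of quadratic forms on D(C), C ≥ P − B, where P ≥ 0 is a selfadjoint operator and B is a bounded everywhere-defined operator. Let (ψ_α) be a family of vectors in D(C) with ψ_α → ψ as α → 0 and ⟨ψ_α, C ψ_α⟩ → 0. Then ⟨ψ, B ψ⟩ ≥ 0, ψ lies in the domain of P^{1/2}, and ‖P^{1/2} ψ‖² ≤ ⟨ψ, B ψ⟩. -/

import Mathlib

open Filter Topology InnerProductSpace


/-- **Regularity of eigenfunctions** (Theorem 3.5 of Fröhlich–Merkli, "Thermal Ionization").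
`C` is a symmetric operator on a domain `DC` in a complex Hilbert space `H` satisfying, in the
sense of quadratic forms on `DC`, `C ≥ P - B`, where `P ≥ 0` is selfadjoint with (closed) square
root `Psqrt`, and `B` is bounded.  If `ψ_α ∈ DC`, `ψ_α → ψ` and `⟨ψ_α, C ψ_α⟩ → 0` as `α → 0⁺`,
then `⟨ψ, Bψ⟩ ≥ 0`, `ψ` belongs to the domain of `P^{1/2}` and `‖P^{1/2}ψ‖² ≤ ⟨ψ, Bψ⟩`. -/
theorem regularity_of_eigenfunctions
    {H : Type*} [NormedAddCommGroup H] [InnerProductSpace ℂ H] [CompleteSpace H]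
    (DC : Set H) (C : H → H)
    (Psqrt : H →ₗ.[ℂ] H) (hPclosed : Psqrt.IsClosed)
    (B : H →L[ℂ] H) (hBsa : IsSelfAdjoint B)
    -- symmetry of C on DC
    (hCsym : ∀ φ ∈ DC, ∀ χ ∈ DC, inner (𝕜 := ℂ) (C φ) χ = inner (𝕜 := ℂ) φ (C χ))
    -- D(C) ⊆ D(P^{1/2})
    (hDC : DC ⊆ (Psqrt.domain : Set H))
    -- quadratic form inequality  C ≥ P − B  on DC
    (hform : ∀ φ (hφ : φ ∈ DC),
      ‖Psqrt ⟨φ, hDC hφ⟩‖ ^ 2 - (inner (𝕜 := ℂ) φ (B φ)).re ≤ (inner (𝕜 := ℂ) φ (C φ)).re)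
    (ψ : H) (ψα : ℝ → H)
    (hmem : ∀ a ∈ Set.Ioi (0 : ℝ), ψα a ∈ DC)
    (hconv : Filter.Tendsto ψα (nhdsWithin 0 (Set.Ioi 0)) (nhds ψ))
    (hvan : Filter.Tendsto (fun a => (inner (𝕜 := ℂ) (ψα a) (C (ψα a))).re)
      (nhdsWithin 0 (Set.Ioi 0)) (nhds 0)) :
    0 ≤ (inner (𝕜 := ℂ) ψ (B ψ)).re ∧
      ∃ hψ : ψ ∈ Psqrt.domain, ‖Psqrt ⟨ψ, hψ⟩‖ ^ 2 ≤ (inner (𝕜 := ℂ) ψ (B ψ)).re := by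
  classical
  set l := nhdsWithin (0:ℝ) (Set.Ioi 0) with hl
  set b := (inner (𝕜 := ℂ) ψ (B ψ)).re with hb
  set f : ℝ → H := fun a =>
    if h : a ∈ Set.Ioi (0:ℝ) then Psqrt ⟨ψα a, hDC (hmem a h)⟩ else 0 with hf
  set g : ℝ → ℝ := fun a =>
    (inner (𝕜 := ℂ) (ψα a) (C (ψα a))).re + (inner (𝕜 := ℂ) (ψα a) (B (ψα a))).re with hgdef
  have hfg : ∀ a ∈ Set.Ioi (0:ℝ), ‖f a‖ ^ 2 ≤ g a := by
    intro a ha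
    have := hform (ψα a) (hmem a ha)
    simp only [hf, dif_pos ha, hgdef]
    linarith
  have hBcont : Continuous fun x : H => (inner (𝕜 := ℂ) x (B x)).re :=
    Complex.continuous_re.comp (continuous_id.inner B.continuous)
  have hg : Tendsto g l (𝓝 b) := by
    have h2 : Tendsto (fun a => (inner (𝕜 := ℂ) (ψα a) (B (ψα a))).re) l (𝓝 b) :=
      (hBcont.tendsto ψ).comp hconv
    simpa using hvan.add h2
  have hIoi : ∀ᶠ a in l, a ∈ Set.Ioi (0:ℝ) := self_mem_nhdsWithin
  have hfg' : ∀ᶠ a in l, ‖f a‖ ^ 2 ≤ g a := hIoi.mono hfg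
  have hb0 : 0 ≤ b :=
    le_of_tendsto_of_tendsto tendsto_const_nhds hg
      (hfg'.mono fun a h => le_trans (sq_nonneg _) h)
  refine ⟨hb0, ?_⟩
  -- an ultrafilter refining the approach filter
  let U : Ultrafilter ℝ := Ultrafilter.of l
  have hU : (U : Filter ℝ) ≤ l := Ultrafilter.of_le l
  set M := Real.sqrt (b + 1) with hM
  have hfb : ∀ᶠ a in l, ‖f a‖ ≤ M := by
    have h1 : ∀ᶠ a in l, g a < b + 1 := hg.eventually_lt_const (lt_add_one b)
    filter_upwards [h1, hfg'] with a h1 h2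
    calc ‖f a‖ = Real.sqrt (‖f a‖ ^ 2) := (Real.sqrt_sq (norm_nonneg _)).symm
      _ ≤ M := Real.sqrt_le_sqrt (by linarith)
  have hfbU : ∀ᶠ a in (U : Filter ℝ), ‖f a‖ ≤ M := hfb.filter_mono hU
  -- weak limit functional
  have key : ∀ v : H, ∃ c : ℂ,
      Tendsto (fun a => (inner (𝕜 := ℂ) (f a) v : ℂ)) (U : Filter ℝ) (𝓝 c) := by
    intro v
    have hev : ∀ᶠ a in (U : Filter ℝ),
        (inner (𝕜 := ℂ) (f a) v : ℂ) ∈ Metric.closedBall (0:ℂ) (M * ‖v‖) := by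
      filter_upwards [hfbU] with a ha
      rw [Metric.mem_closedBall, dist_zero_right]
      exact (norm_inner_le_norm _ _).trans (mul_le_mul_of_nonneg_right ha (norm_nonneg _))
    obtain ⟨c, -, hc⟩ := (isCompact_closedBall (0:ℂ) (M * ‖v‖)).ultrafilter_le_nhds
      (U.map fun a => (inner (𝕜 := ℂ) (f a) v : ℂ))
      (by rwa [Ultrafilter.coe_map, le_principal_iff, mem_map])
    exact ⟨c, hc⟩
  choose Lf hLf using key
  have hLadd : ∀ v w, Lf (v + w) = Lf v + Lf w := fun v w =>
    tendsto_nhds_unique (hLf (v + w))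
      (by simpa only [inner_add_right] using (hLf v).add (hLf w))
  have hLsmul : ∀ (c : ℂ) (v : H), Lf (c • v) = c • Lf v := fun c v =>
    tendsto_nhds_unique (hLf (c • v))
      (by simpa only [inner_smul_right, smul_eq_mul] using (hLf v).const_mul c)
  have hLbound : ∀ v, ‖Lf v‖ ≤ M * ‖v‖ := by
    intro v
    refine le_of_tendsto (hLf v).norm ?_
    filter_upwards [hfbU] with a ha
    exact (norm_inner_le_norm _ _).trans (mul_le_mul_of_nonneg_right ha (norm_nonneg _))
  let L : H →L[ℂ] ℂ := LinearMap.mkContinuous ⟨⟨Lf, hLadd⟩, hLsmul⟩ M hLbound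
  set η : H := (toDual ℂ H).symm L with hη
  have hηv : ∀ v : H, (inner (𝕜 := ℂ) η v : ℂ) = Lf v := fun v => toDual_symm_apply
  -- the graph as a closed subspace of the ℓ² product
  let e := WithLp.prodContinuousLinearEquiv 2 ℂ H H
  let G' : Submodule ℂ (WithLp 2 (H × H)) :=
    Psqrt.graph.comap (e : WithLp 2 (H × H) →ₗ[ℂ] H × H)
  have hG'closed : IsClosed (G' : Set (WithLp 2 (H × H))) :=
    hPclosed.preimage e.continuous
  haveI : CompleteSpace G' := hG'closed.completeSpace_coe
  have horth : G'ᗮᗮ = G' := Submodule.orthogonal_orthogonal G'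
  have hzmem : e.symm (ψ, η) ∈ G'ᗮᗮ := by
    rw [Submodule.mem_orthogonal]
    intro w hw
    have hwg : ∀ a ∈ Set.Ioi (0:ℝ), (inner (𝕜 := ℂ) w (e.symm (ψα a, f a)) : ℂ) = 0 := by
      intro a ha
      have hmemg : e.symm (ψα a, f a) ∈ G' := by
        simp only [G', Submodule.mem_comap, ContinuousLinearEquiv.coe_coe,
          ContinuousLinearEquiv.apply_symm_apply]
        have hfa : f a = Psqrt ⟨ψα a, hDC (hmem a ha)⟩ := dif_pos ha
        rw [hfa]
        exact Psqrt.mem_graph ⟨ψα a, hDC (hmem a ha)⟩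
      exact (Submodule.mem_orthogonal' _ _).mp hw _ hmemg
    -- inner products componentwise
    have hcomp : ∀ x y : H, (inner (𝕜 := ℂ) w (e.symm (x, y)) : ℂ) =
        inner (𝕜 := ℂ) ((e w).1) x + inner (𝕜 := ℂ) ((e w).2) y := by
      intro x y
      rw [WithLp.prod_inner_apply]
      rfl
    have h1 : Tendsto (fun a => (inner (𝕜 := ℂ) ((e w).1) (ψα a) : ℂ)) (U : Filter ℝ)
        (𝓝 (inner (𝕜 := ℂ) ((e w).1) ψ)) :=
      ((continuous_const.inner continuous_id).tendsto ψ).comp (hconv.mono_left hU)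
    have h2 : Tendsto (fun a => (inner (𝕜 := ℂ) ((e w).2) (f a) : ℂ)) (U : Filter ℝ)
        (𝓝 (inner (𝕜 := ℂ) ((e w).2) η)) := by
      have := (Complex.continuous_conj.tendsto _).comp (hLf ((e w).2))
      simp only [Function.comp_def] at this
      have heq : ∀ a : ℝ, (starRingEnd ℂ) (inner (𝕜 := ℂ) (f a) ((e w).2)) =
          inner (𝕜 := ℂ) ((e w).2) (f a) := fun a => inner_conj_symm _ _
      have heq2 : (starRingEnd ℂ) (Lf ((e w).2)) = inner (𝕜 := ℂ) ((e w).2) η := by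
        rw [← hηv ((e w).2), inner_conj_symm]
      rw [← heq2]
      exact this.congr heq
    have hsum : Tendsto (fun a => (inner (𝕜 := ℂ) w (e.symm (ψα a, f a)) : ℂ)) (U : Filter ℝ)
        (𝓝 (inner (𝕜 := ℂ) ((e w).1) ψ + inner (𝕜 := ℂ) ((e w).2) η)) := by
      have := h1.add h2
      exact this.congr fun a => (hcomp (ψα a) (f a)).symm
    have hzero : Tendsto (fun a => (inner (𝕜 := ℂ) w (e.symm (ψα a, f a)) : ℂ)) (U : Filter ℝ)
        (𝓝 0) := by
      refine Tendsto.congr' ?_ tendsto_const_nhds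
      filter_upwards [hIoi.filter_mono hU] with a ha
      exact (hwg a ha).symm
    have := tendsto_nhds_unique hzero hsum
    rw [hcomp ψ η]
    exact this.symm
  rw [horth] at hzmem
  have hgraph : (ψ, η) ∈ Psqrt.graph := by
    have := hzmem
    simp only [G', Submodule.mem_comap, ContinuousLinearEquiv.coe_coe,
      ContinuousLinearEquiv.apply_symm_apply] at this
    exact this
  rw [LinearPMap.mem_graph_iff] at hgraph
  obtain ⟨y, hy1, hy2⟩ := hgraph
  have hyψ : (y : H) = ψ := hy1
  have hψmem : ψ ∈ Psqrt.domain := hyψ ▸ y.2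
  refine ⟨hψmem, ?_⟩
  have hPψ : Psqrt ⟨ψ, hψmem⟩ = η := by
    have heq : (⟨ψ, hψmem⟩ : Psqrt.domain) = y := Subtype.ext hyψ.symm
    rw [heq]
    exact hy2
  rw [hPψ]
  -- final bound ‖η‖² ≤ b
  have h1 : Tendsto (fun a => (inner (𝕜 := ℂ) (f a) η : ℂ).re) (U : Filter ℝ) (𝓝 (‖η‖ ^ 2)) := by
    have := (Complex.continuous_re.tendsto _).comp (hLf η)
    simp only [Function.comp_def] at this
    have : Tendsto (fun a => (inner (𝕜 := ℂ) (f a) η : ℂ).re) (U : Filter ℝ) (𝓝 (Lf η).re) := this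
    have heq : (Lf η).re = ‖η‖ ^ 2 := by
      rw [← hηv η]
      exact inner_self_eq_norm_sq (𝕜 := ℂ) η
    rwa [heq] at this
  have h2 : Tendsto (fun a => Real.sqrt (g a) * ‖η‖) (U : Filter ℝ)
      (𝓝 (Real.sqrt b * ‖η‖)) :=
    ((Real.continuous_sqrt.tendsto b).comp (hg.mono_left hU)).mul_const ‖η‖
  have hev : ∀ᶠ a in (U : Filter ℝ), (inner (𝕜 := ℂ) (f a) η : ℂ).re ≤ Real.sqrt (g a) * ‖η‖ := by
    filter_upwards [hfg'.filter_mono hU] with a ha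
    have hfa : ‖f a‖ ≤ Real.sqrt (g a) := by
      calc ‖f a‖ = Real.sqrt (‖f a‖ ^ 2) := (Real.sqrt_sq (norm_nonneg _)).symm
        _ ≤ _ := Real.sqrt_le_sqrt ha
    calc (inner (𝕜 := ℂ) (f a) η : ℂ).re ≤ ‖(inner (𝕜 := ℂ) (f a) η : ℂ)‖ :=
          Complex.re_le_norm _
      _ ≤ ‖f a‖ * ‖η‖ := norm_inner_le_norm _ _
      _ ≤ Real.sqrt (g a) * ‖η‖ := mul_le_mul_of_nonneg_right hfa (norm_nonneg _)
  have hle : ‖η‖ ^ 2 ≤ Real.sqrt b * ‖η‖ := le_of_tendsto_of_tendsto h1 h2 hev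
  nlinarith [sq_nonneg (‖η‖ - Real.sqrt b), Real.sq_sqrt hb0, norm_nonneg η,
    Real.sqrt_nonneg b]
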